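/- Under the standing assumptions on R_1,...,R_m, if x and y both minimize T(q) = Σ_j R_j(q_j) over the isotone cone ℝ^m_↑, then the componentwise minimum min(x,y) and the componentwise maximum max(x,y) are also minimizers of T over ℝ^m_↑. -/
import Mathlib

/-- Componentwise min and max of two minimizers over the isotone cone are minimizers. -/
theorem stmt2 (m : ℕ) (hm : 1 ≤ m) (R : ℕ → ℝ → ℝ) (L U : ℕ → ℕ → ℝ)
    (hLU : ∀ a b, 1 ≤ a → a ≤ b → b ≤ m → L a b ≤ U a b)
    (hmin : ∀ a b, 1 ≤ a → a ≤ b → b ≤ m → ∀ q : ℝ,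
      (∀ r : ℝ, (∑ j ∈ Finset.Icc a b, R j q) ≤ ∑ j ∈ Finset.Icc a b, R j r) ↔
        q ∈ Set.Icc (L a b) (U a b))
    (hanti : ∀ a b, 1 ≤ a → a ≤ b → b ≤ m →
      StrictAntiOn (fun q => ∑ j ∈ Finset.Icc a b, R j q) (Set.Iic (L a b)))
    (hmono : ∀ a b, 1 ≤ a → a ≤ b → b ≤ m →
      StrictMonoOn (fun q => ∑ j ∈ Finset.Icc a b, R j q) (Set.Ici (U a b)))
    (x y : ℕ → ℝ) (hx : MonotoneOn x (Set.Icc 1 m)) (hy : MonotoneOn y (Set.Icc 1 m))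
    (hxmin : ∀ z : ℕ → ℝ, MonotoneOn z (Set.Icc 1 m) →
      (∑ j ∈ Finset.Icc 1 m, R j (x j)) ≤ ∑ j ∈ Finset.Icc 1 m, R j (z j))
    (hymin : ∀ z : ℕ → ℝ, MonotoneOn z (Set.Icc 1 m) →
      (∑ j ∈ Finset.Icc 1 m, R j (y j)) ≤ ∑ j ∈ Finset.Icc 1 m, R j (z j)) :
    (MonotoneOn (fun j => min (x j) (y j)) (Set.Icc 1 m) ∧
      ∀ z : ℕ → ℝ, MonotoneOn z (Set.Icc 1 m) →
        (∑ j ∈ Finset.Icc 1 m, R j (min (x j) (y j))) ≤ ∑ j ∈ Finset.Icc 1 m, R j (z j)) ∧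
    (MonotoneOn (fun j => max (x j) (y j)) (Set.Icc 1 m) ∧
      ∀ z : ℕ → ℝ, MonotoneOn z (Set.Icc 1 m) →
        (∑ j ∈ Finset.Icc 1 m, R j (max (x j) (y j))) ≤ ∑ j ∈ Finset.Icc 1 m, R j (z j)) := by
  have hminmono : MonotoneOn (fun j => min (x j) (y j)) (Set.Icc 1 m) := fun a ha b hb hab =>
    min_le_min (hx ha hb hab) (hy ha hb hab)
  have hmaxmono : MonotoneOn (fun j => max (x j) (y j)) (Set.Icc 1 m) := fun a ha b hb hab =>
    max_le_max (hx ha hb hab) (hy ha hb hab)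
  -- pointwise sum identity
  have hpt : ∀ j, R j (min (x j) (y j)) + R j (max (x j) (y j)) = R j (x j) + R j (y j) := by
    intro j
    rcases le_total (x j) (y j) with h | h
    · rw [min_eq_left h, max_eq_right h]
    · rw [min_eq_right h, max_eq_left h]; ring
  have hsum : (∑ j ∈ Finset.Icc 1 m, R j (min (x j) (y j))) +
      (∑ j ∈ Finset.Icc 1 m, R j (max (x j) (y j))) =
      (∑ j ∈ Finset.Icc 1 m, R j (x j)) + (∑ j ∈ Finset.Icc 1 m, R j (y j)) := by
    rw [← Finset.sum_add_distrib, ← Finset.sum_add_distrib]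
    exact Finset.sum_congr rfl fun j _ => hpt j
  have hxy : (∑ j ∈ Finset.Icc 1 m, R j (y j)) = ∑ j ∈ Finset.Icc 1 m, R j (x j) :=
    le_antisymm (hymin x hx) (hxmin y hy)
  have h1 : (∑ j ∈ Finset.Icc 1 m, R j (x j)) ≤ ∑ j ∈ Finset.Icc 1 m, R j (min (x j) (y j)) :=
    hxmin _ hminmono
  have h2 : (∑ j ∈ Finset.Icc 1 m, R j (x j)) ≤ ∑ j ∈ Finset.Icc 1 m, R j (max (x j) (y j)) :=
    hxmin _ hmaxmono
  have heq1 : (∑ j ∈ Finset.Icc 1 m, R j (min (x j) (y j))) = ∑ j ∈ Finset.Icc 1 m, R j (x j) := by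
    rw [hxy] at hsum; linarith
  have heq2 : (∑ j ∈ Finset.Icc 1 m, R j (max (x j) (y j))) = ∑ j ∈ Finset.Icc 1 m, R j (x j) := by
    rw [hxy] at hsum; linarith
  exact ⟨⟨hminmono, fun z hz => heq1 ▸ hxmin z hz⟩, ⟨hmaxmono, fun z hz => heq2 ▸ hxmin z hz⟩⟩
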